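/- Let (X1,X2,X3,X4) be a random vector on finite sets with positive marginals whose entropy function is a·r1 + b·r2, where r1 is the rank function of Û^4_{3,5} and r2 that of U_{2,4}. Then X1, X2, X3 are uniformly distributed on alphabets of a common size v, and a + b = log v. -/

import Mathlib

open Finset
open scoped BigOperators
noncomputable section

/-- Probability that the `A`-marginal of the random vector with joint pmf `p`
takes the same value as on `x`. -/
def margProb {n : ℕ} {m : Fin n → ℕ} (p : (∀ i, Fin (m i)) → ℝ)
    (A : Finset (Fin n)) (x : ∀ i, Fin (m i)) : ℝ :=
  ∑ y : ∀ i, Fin (m i), if ∀ i ∈ A, y i = x i then p y else 0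

/-- The Shannon entropy `H(X_A)` of the subvector indexed by `A`, for the random
vector with joint pmf `p`. -/
def jointEntropy {n : ℕ} {m : Fin n → ℕ} (p : (∀ i, Fin (m i)) → ℝ)
    (A : Finset (Fin n)) : ℝ :=
  -∑ x : ∀ i, Fin (m i), p x * Real.log (margProb p A x)

/-- `p` is a probability mass function. -/
def IsPMF {α : Type*} [Fintype α] (p : α → ℝ) : Prop :=
  (∀ x, 0 ≤ p x) ∧ ∑ x, p x = 1

/-- `h` is an entropy function of degree `n`: it arises as `A ↦ H(X_A)` for a
random vector `(X_1, …, X_n)` on finite sets. -/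
def IsEntropyFunc (n : ℕ) (h : Finset (Fin n) → ℝ) : Prop :=
  ∃ (m : Fin n → ℕ) (p : (∀ i, Fin (m i)) → ℝ), IsPMF p ∧ ∀ A, jointEntropy p A = h A

/-- Marginal probability of the single coordinate `i` taking value `x`. -/
def marg1 {n : ℕ} {m : Fin n → ℕ} (p : (∀ i, Fin (m i)) → ℝ)
    (i : Fin n) (x : Fin (m i)) : ℝ :=
  ∑ y : ∀ j, Fin (m j), if y i = x then p y else 0

/-- Marginal probability of the pair of coordinates `(i, j)` taking values `(x, y)`. -/
def marg2 {n : ℕ} {m : Fin n → ℕ} (p : (∀ i, Fin (m i)) → ℝ)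
    (i j : Fin n) (x : Fin (m i)) (y : Fin (m j)) : ℝ :=
  ∑ z : ∀ k, Fin (m k), if z i = x ∧ z j = y then p z else 0

/-- Rank function of `Û^4_{3,5}` (index `3` plays the role of element `4`). -/
def rU35hat4 (A : Finset (Fin 4)) : ℝ :=
  if (3 : Fin 4) ∈ A then min 3 ((A.card : ℝ) + 1) else (A.card : ℝ)

/-- Rank function of the uniform matroid `U_{2,4}`. -/
def r24 (A : Finset (Fin 4)) : ℝ := min 2 (A.card : ℝ)

lemma sum_marg1 {n : ℕ} {m : Fin n → ℕ} (p : (∀ i, Fin (m i)) → ℝ)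
    (hp1 : ∑ x, p x = 1) (i : Fin n) : ∑ u, marg1 p i u = 1 := by
  unfold marg1
  rw [Finset.sum_comm]
  rw [← hp1]
  refine Finset.sum_congr rfl fun z _ => ?_
  simp [eq_comm, Finset.sum_ite_eq]

lemma group1 {n : ℕ} {m : Fin n → ℕ} (p : (∀ i, Fin (m i)) → ℝ) (i : Fin n)
    (g : Fin (m i) → ℝ) :
    ∑ u, marg1 p i u * g u = ∑ x, p x * g (x i) := by
  unfold marg1
  simp only [Finset.sum_mul, ite_mul, zero_mul]
  rw [Finset.sum_comm]
  refine Finset.sum_congr rfl fun z _ => ?_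
  simp [eq_comm, Finset.sum_ite_eq]

lemma group2 {n : ℕ} {m : Fin n → ℕ} (p : (∀ i, Fin (m i)) → ℝ) (i j : Fin n)
    (g : Fin (m i) → Fin (m j) → ℝ) :
    ∑ u, ∑ v, marg2 p i j u v * g u v = ∑ x, p x * g (x i) (x j) := by
  unfold marg2
  simp only [Finset.sum_mul, ite_mul, zero_mul]
  calc ∑ u, ∑ v, ∑ z, (if z i = u ∧ z j = v then p z * g u v else 0)
      = ∑ u, ∑ z, ∑ v, (if z i = u ∧ z j = v then p z * g u v else 0) :=
        Finset.sum_congr rfl fun u _ => Finset.sum_comm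
    _ = ∑ z, ∑ u, ∑ v, (if z i = u ∧ z j = v then p z * g u v else 0) := Finset.sum_comm
    _ = ∑ x, p x * g (x i) (x j) := by
        refine Finset.sum_congr rfl fun z _ => ?_
        simp [ite_and, Finset.sum_ite_eq]

lemma margProb_single {n : ℕ} {m : Fin n → ℕ} (p : (∀ i, Fin (m i)) → ℝ)
    (i : Fin n) (x : ∀ k, Fin (m k)) : margProb p {i} x = marg1 p i (x i) := by
  unfold margProb marg1
  refine Finset.sum_congr rfl fun y _ => ?_
  simp

lemma margProb_pair {n : ℕ} {m : Fin n → ℕ} (p : (∀ i, Fin (m i)) → ℝ)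
    (i j : Fin n) (x : ∀ k, Fin (m k)) :
    margProb p {i, j} x = marg2 p i j (x i) (x j) := by
  unfold margProb marg2
  refine Finset.sum_congr rfl fun y _ => ?_
  simp

lemma gibbs_eq {β : Type*} [Fintype β] (r s : β → ℝ)
    (hr0 : ∀ x, 0 ≤ r x) (hr1 : ∑ x, r x = 1)
    (hs0 : ∀ x, 0 < s x) (hs1 : ∑ x, s x = 1)
    (heq : ∑ x, r x * Real.log (r x) = ∑ x, r x * Real.log (s x)) :
    ∀ x, r x = s x := by
  have hle : ∀ x ∈ Finset.univ, r x * (Real.log (s x) - Real.log (r x)) ≤ s x - r x := by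
    intro x _
    rcases eq_or_lt_of_le (hr0 x) with h | h
    · rw [← h]; simpa using (hs0 x).le
    · rw [← Real.log_div (hs0 x).ne' h.ne']
      calc r x * Real.log (s x / r x) ≤ r x * (s x / r x - 1) :=
            mul_le_mul_of_nonneg_left (Real.log_le_sub_one_of_pos (div_pos (hs0 x) h)) h.le
        _ = s x - r x := by field_simp
  have hsum : ∑ x, r x * (Real.log (s x) - Real.log (r x)) = ∑ x, (s x - r x) := by
    simp only [mul_sub]
    rw [Finset.sum_sub_distrib, Finset.sum_sub_distrib, ← heq, hr1, hs1]; ring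
  have key := (Finset.sum_eq_sum_iff_of_le hle).mp hsum
  intro x
  have hx := key x (Finset.mem_univ x)
  rcases eq_or_lt_of_le (hr0 x) with h | h
  · rw [← h] at hx ⊢; simp at hx; linarith [hs0 x]
  · by_contra hne
    have ht : s x / r x ≠ 1 := by
      intro h1
      rw [div_eq_one_iff_eq h.ne'] at h1
      exact hne h1.symm
    have hstrict := Real.log_lt_sub_one_of_pos (div_pos (hs0 x) h) ht
    rw [← Real.log_div (hs0 x).ne' h.ne'] at hx
    have : r x * Real.log (s x / r x) < r x * (s x / r x - 1) :=
      (mul_lt_mul_iff_right₀ h).mpr hstrict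
    rw [hx] at this
    have h2 : r x * (s x / r x - 1) = s x - r x := by field_simp
    linarith [h2 ▸ this]

lemma marg2_nonneg {n : ℕ} {m : Fin n → ℕ} (p : (∀ i, Fin (m i)) → ℝ)
    (hp0 : ∀ x, 0 ≤ p x) (i j : Fin n) (u : Fin (m i)) (v : Fin (m j)) :
    0 ≤ marg2 p i j u v :=
  Finset.sum_nonneg fun z _ => by split_ifs; exacts [hp0 z, le_rfl]

lemma indep_of_entropy_add {n : ℕ} {m : Fin n → ℕ} (p : (∀ i, Fin (m i)) → ℝ)
    (hp0 : ∀ x, 0 ≤ p x) (hp1 : ∑ x, p x = 1)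
    (hpos : ∀ (k : Fin n) (x : Fin (m k)), 0 < marg1 p k x)
    (i j : Fin n)
    (hH : jointEntropy p {i, j} = jointEntropy p {i} + jointEntropy p {j}) :
    ∀ u v, marg2 p i j u v = marg1 p i u * marg1 p j v := by
  have hHij : jointEntropy p {i, j}
      = -∑ u, ∑ v, marg2 p i j u v * Real.log (marg2 p i j u v) := by
    unfold jointEntropy
    rw [group2 p i j (fun u v => Real.log (marg2 p i j u v))]
    congr 1
    exact Finset.sum_congr rfl fun x _ => by rw [margProb_pair]
  have hHi : ∀ (k : Fin n), jointEntropy p {k} = -∑ x, p x * Real.log (marg1 p k (x k)) := by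
    intro k
    unfold jointEntropy
    congr 1
    exact Finset.sum_congr rfl fun x _ => by rw [margProb_single]
  have hsum2 : ∑ u, ∑ v, marg2 p i j u v = 1 := by
    have := group2 p i j (fun _ _ => (1:ℝ))
    simpa [hp1] using this
  have hcross : jointEntropy p {i} + jointEntropy p {j}
      = -∑ u, ∑ v, marg2 p i j u v * (Real.log (marg1 p i u) + Real.log (marg1 p j v)) := by
    rw [hHi i, hHi j]
    rw [group2 p i j (fun u v => Real.log (marg1 p i u) + Real.log (marg1 p j v))]
    rw [← neg_add, ← Finset.sum_add_distrib]
    congr 1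
    exact Finset.sum_congr rfl fun x _ => by ring
  rw [hHij, hcross, neg_inj] at hH
  -- move to product type
  intro u v
  have := gibbs_eq (β := Fin (m i) × Fin (m j))
    (fun y => marg2 p i j y.1 y.2) (fun y => marg1 p i y.1 * marg1 p j y.2)
    (fun y => marg2_nonneg p hp0 i j y.1 y.2)
    (by rw [Fintype.sum_prod_type]; exact hsum2)
    (fun y => mul_pos (hpos i y.1) (hpos j y.2))
    (by
      rw [Fintype.sum_prod_type]
      rw [show ∑ u' : Fin (m i), ∑ v' : Fin (m j), marg1 p i u' * marg1 p j v'
          = (∑ u' : Fin (m i), marg1 p i u') * (∑ v' : Fin (m j), marg1 p j v') by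
        rw [Finset.sum_mul_sum]]
      rw [sum_marg1 p hp1 i, sum_marg1 p hp1 j, one_mul])
    (by
      rw [Fintype.sum_prod_type, Fintype.sum_prod_type]
      rw [hH]
      refine Finset.sum_congr rfl fun u' _ => Finset.sum_congr rfl fun v' _ => ?_
      rw [Real.log_mul (hpos i u').ne' (hpos j v').ne'])
  exact this (u, v)

lemma margProb_mono {n : ℕ} {m : Fin n → ℕ} (p : (∀ i, Fin (m i)) → ℝ)
    (hp0 : ∀ x, 0 ≤ p x) {A B : Finset (Fin n)} (hAB : A ⊆ B) (x : ∀ k, Fin (m k)) :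
    margProb p B x ≤ margProb p A x := by
  refine Finset.sum_le_sum fun y _ => ?_
  by_cases h : ∀ k ∈ B, y k = x k
  · rw [if_pos h, if_pos (fun k hk => h k (hAB hk))]
  · rw [if_neg h]; split_ifs; exacts [hp0 y, le_rfl]

lemma self_le_margProb {n : ℕ} {m : Fin n → ℕ} (p : (∀ i, Fin (m i)) → ℝ)
    (hp0 : ∀ x, 0 ≤ p x) (A : Finset (Fin n)) (x : ∀ k, Fin (m k)) :
    p x ≤ margProb p A x := by
  have h := Finset.single_le_sum (f := fun y => if ∀ k ∈ A, y k = x k then p y else 0)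
    (fun y _ => by split_ifs; exacts [hp0 y, le_rfl]) (Finset.mem_univ x)
  simpa [margProb] using h

lemma margProb_eq_of_entropy_eq {n : ℕ} {m : Fin n → ℕ} (p : (∀ i, Fin (m i)) → ℝ)
    (hp0 : ∀ x, 0 ≤ p x) {A B : Finset (Fin n)} (hAB : A ⊆ B)
    (hH : jointEntropy p A = jointEntropy p B) :
    ∀ x, 0 < p x → margProb p A x = margProb p B x := by
  have hterm : ∀ x ∈ Finset.univ (α := ∀ k, Fin (m k)),
      0 ≤ p x * (Real.log (margProb p A x) - Real.log (margProb p B x)) := by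
    intro x _
    rcases eq_or_lt_of_le (hp0 x) with h | h
    · rw [← h, zero_mul]
    · have hB : 0 < margProb p B x := lt_of_lt_of_le h (self_le_margProb p hp0 B x)
      have hle := margProb_mono p hp0 hAB x
      have := Real.log_le_log hB hle
      have h2 : 0 ≤ Real.log (margProb p A x) - Real.log (margProb p B x) := by linarith
      positivity
  have hsum : ∑ x, p x * (Real.log (margProb p A x) - Real.log (margProb p B x)) = 0 := by
    simp only [mul_sub]
    rw [Finset.sum_sub_distrib]
    have : jointEntropy p B - jointEntropy p A = 0 := by rw [hH]; ring
    unfold jointEntropy at this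
    linarith
  have hall := (Finset.sum_eq_zero_iff_of_nonneg hterm).mp hsum
  intro x hx
  have h := hall x (Finset.mem_univ x)
  have hlog : Real.log (margProb p A x) = Real.log (margProb p B x) := by
    rcases mul_eq_zero.mp h with h' | h'
    · exact absurd h' hx.ne'
    · linarith [sub_eq_zero.mp h']
  have hB : 0 < margProb p B x := lt_of_lt_of_le hx (self_le_margProb p hp0 B x)
  have hle := margProb_mono p hp0 hAB x
  rcases eq_or_lt_of_le hle with h' | h'
  · exact h'.symm
  · have := Real.log_lt_log hB h'
    exact absurd hlog (by linarith)

lemma det_point {n : ℕ} {m : Fin n → ℕ} (p : (∀ i, Fin (m i)) → ℝ)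
    (hp0 : ∀ x, 0 ≤ p x) (i j t : Fin n)
    (hH : jointEntropy p {j, t} = jointEntropy p {i, j, t})
    {x x' : ∀ k, Fin (m k)} (hx : 0 < p x) (hx' : 0 < p x')
    (hj : x' j = x j) (ht : x' t = x t) : x' i = x i := by
  by_contra hne
  have hsub : ({j, t} : Finset (Fin n)) ⊆ {i, j, t} := by
    intro k hk; simp only [Finset.mem_insert, Finset.mem_singleton] at hk ⊢; tauto
  have hq := margProb_eq_of_entropy_eq p hp0 hsub hH x hx
  set F : (∀ k, Fin (m k)) → ℝ := fun y =>
    (if ∀ k ∈ ({j, t} : Finset (Fin n)), y k = x k then p y else 0) -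
    (if ∀ k ∈ ({i, j, t} : Finset (Fin n)), y k = x k then p y else 0) with hF
  have hF0 : ∀ y, 0 ≤ F y := by
    intro y
    rw [hF]; dsimp only
    by_cases h : ∀ k ∈ ({i, j, t} : Finset (Fin n)), y k = x k
    · rw [if_pos h, if_pos (fun k hk => h k (hsub hk)), sub_self]
    · rw [if_neg h]; split_ifs; exacts [by simpa using hp0 y, by simp]
  have hsumF : ∑ y, F y = 0 := by
    rw [hF]
    rw [Finset.sum_sub_distrib]
    have : margProb p {j, t} x - margProb p {i, j, t} x = 0 := by rw [hq]; ring
    unfold margProb at this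
    convert this using 2
  have hFx' : F x' = p x' := by
    rw [hF]; dsimp only
    rw [if_pos, if_neg, sub_zero]
    · intro hall
      exact hne (hall i (by simp))
    · intro k hk
      simp only [Finset.mem_insert, Finset.mem_singleton] at hk
      rcases hk with rfl | rfl
      exacts [hj, ht]
  have := Finset.single_le_sum (f := F) (fun y _ => hF0 y) (Finset.mem_univ x')
  rw [hsumF, hFx'] at this
  linarith

lemma key_bound {n : ℕ} {m : Fin n → ℕ} (p : (∀ i, Fin (m i)) → ℝ)
    (hp0 : ∀ x, 0 ≤ p x)
    (hpos : ∀ (k : Fin n) (x : Fin (m k)), 0 < marg1 p k x)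
    (i j t : Fin n)
    (hm3 : ∑ w, marg1 p t w = 1)
    (hindij : ∀ u v, marg2 p i j u v = marg1 p i u * marg1 p j v)
    (hindi3 : ∀ u w, marg2 p i t u w = marg1 p i u * marg1 p t w)
    (hdet : ∀ x x', 0 < p x → 0 < p x' → x' j = x j → x' t = x t → x' i = x i)
    (v : Fin (m j)) :
    (m i : ℝ) * marg1 p j v ≤ 1 := by
  set T : Fin (m i) → Fin (m t) → ℝ :=
    fun u w => ∑ z, if z i = u ∧ z t = w ∧ z j = v then p z else 0 with hT
  have hT0 : ∀ u w, 0 ≤ T u w := fun u w =>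
    Finset.sum_nonneg fun z _ => by split_ifs; exacts [hp0 z, le_rfl]
  have hTsum : ∀ u, ∑ w, T u w = marg2 p i j u v := by
    intro u
    rw [hT]; dsimp only
    rw [Finset.sum_comm]
    unfold marg2
    refine Finset.sum_congr rfl fun z _ => ?_
    by_cases h : z i = u ∧ z j = v
    · rw [if_pos h]
      rw [Finset.sum_eq_single (z t)]
      · rw [if_pos ⟨h.1, rfl, h.2⟩]
      · intro w _ hw; rw [if_neg]; rintro ⟨-, h3, -⟩; exact hw h3.symm
      · intro h'; exact absurd (Finset.mem_univ _) h'
    · rw [if_neg h, Finset.sum_eq_zero]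
      intro w _; rw [if_neg]; rintro ⟨h1, -, h2⟩; exact h ⟨h1, h2⟩
  have hTle : ∀ u w, T u w ≤ marg1 p i u * marg1 p t w := by
    intro u w
    rw [← hindi3]
    unfold marg2; rw [hT]; dsimp only
    refine Finset.sum_le_sum fun z _ => ?_
    by_cases h : z i = u ∧ z t = w ∧ z j = v
    · rw [if_pos h, if_pos ⟨h.1, h.2.1⟩]
    · rw [if_neg h]; split_ifs; exacts [hp0 z, le_rfl]
  have hTwit : ∀ u w, 0 < T u w → ∃ z, 0 < p z ∧ z i = u ∧ z t = w ∧ z j = v := by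
    intro u w h
    by_contra hno
    push_neg at hno
    have hz : T u w = 0 := by
      rw [hT]; dsimp only
      refine Finset.sum_eq_zero fun z _ => ?_
      split_ifs with hc
      · rcases hc with ⟨h1, h2, h3⟩
        rcases eq_or_lt_of_le (hp0 z) with h' | h'
        · exact h'.symm
        · exact absurd h3 (hno z h' h1 h2)
      · rfl
    linarith
  have step : ∀ u, marg1 p j v = (∑ w, T u w) / marg1 p i u := by
    intro u
    rw [hTsum u, hindij u v, mul_comm, mul_div_assoc, div_self (hpos i u).ne', mul_one]
  calc (m i : ℝ) * marg1 p j v = ∑ _u : Fin (m i), marg1 p j v := by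
        rw [Finset.sum_const, Finset.card_univ, Fintype.card_fin, nsmul_eq_mul]
    _ = ∑ u, ∑ w, T u w / marg1 p i u := by
        refine Finset.sum_congr rfl fun u _ => ?_
        rw [step u, Finset.sum_div]
    _ ≤ ∑ u, ∑ w, (if 0 < T u w then marg1 p t w else 0) := by
        refine Finset.sum_le_sum fun u _ => Finset.sum_le_sum fun w _ => ?_
        by_cases h : 0 < T u w
        · rw [if_pos h, div_le_iff₀ (hpos i u)]
          calc T u w ≤ marg1 p i u * marg1 p t w := hTle u w
            _ = marg1 p t w * marg1 p i u := mul_comm _ _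
        · rw [if_neg h]
          rw [show T u w = 0 from le_antisymm (not_lt.mp h) (hT0 u w), zero_div]
    _ = ∑ w, ∑ u, (if 0 < T u w then marg1 p t w else 0) := Finset.sum_comm
    _ ≤ ∑ w, marg1 p t w := by
        refine Finset.sum_le_sum fun w _ => ?_
        rw [← Finset.sum_filter, Finset.sum_const]
        have hcard : (Finset.univ.filter (fun u => 0 < T u w)).card ≤ 1 := by
          refine Finset.card_le_one.mpr fun u hu u' hu' => ?_
          simp only [Finset.mem_filter] at hu hu'
          obtain ⟨z, hz, hzi, hzt, hzj⟩ := hTwit u w hu.2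
          obtain ⟨z', hz', hzi', hzt', hzj'⟩ := hTwit u' w hu'.2
          have := hdet z z' hz hz' (by rw [hzj, hzj']) (by rw [hzt, hzt'])
          rw [← hzi, ← hzi', this]
        rw [nsmul_eq_mul]
        calc ((Finset.univ.filter (fun u => 0 < T u w)).card : ℝ) * marg1 p t w
            ≤ 1 * marg1 p t w := by
              apply mul_le_mul_of_nonneg_right _ (hpos t w).le
              exact_mod_cast hcard
          _ = marg1 p t w := one_mul _
    _ = 1 := hm3

/-- If the entropy function of `(X1,X2,X3,X4)` equals `a·r(Û^4_{3,5}) + b·r(U_{2,4})`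
with `a, b ≥ 0`, then `X1, X2, X3` are uniform on alphabets of a common size `v`,
and `a + b = log v`. -/
theorem statement10 {m : Fin 4 → ℕ} (p : (∀ i, Fin (m i)) → ℝ)
    (hpmf : IsPMF p)
    (hpos : ∀ (i : Fin 4) (x : Fin (m i)), 0 < marg1 p i x)
    (a b : ℝ) (ha : 0 ≤ a) (hb : 0 ≤ b)
    (hEnt : ∀ A : Finset (Fin 4), jointEntropy p A = a * rU35hat4 A + b * r24 A) :
    (∀ i : Fin 4, i ≠ 3 → ∀ x : Fin (m i), marg1 p i x = (m i : ℝ)⁻¹) ∧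
    m 0 = m 1 ∧ m 1 = m 2 ∧ a + b = Real.log (m 0) := by

  obtain ⟨hp0, hp1⟩ := hpmf
  have hne : Nonempty (∀ k, Fin (m k)) := by
    by_contra h
    rw [not_nonempty_iff] at h
    rw [Finset.univ_eq_empty, Finset.sum_empty] at hp1
    norm_num at hp1
  have hm : ∀ i, 0 < m i := fun i => (Classical.arbitrary (∀ k, Fin (m k)) i).pos
  -- entropy values
  have hent1 : ∀ A : Finset (Fin 4), (3:Fin 4) ∉ A → A.card = 1 → jointEntropy p A = a + b := by
    intro A h3 hc
    rw [hEnt]; simp only [rU35hat4, r24]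
    rw [if_neg h3, hc]
    norm_num [min_def]
  have hent2 : ∀ A : Finset (Fin 4), (3:Fin 4) ∉ A → A.card = 2 →
      jointEntropy p A = a*2 + b*2 := by
    intro A h3 hc
    rw [hEnt]; simp only [rU35hat4, r24]
    rw [if_neg h3, hc]
    norm_num [min_def]
  have hent3s : jointEntropy p {3} = a*2 + b := by
    rw [hEnt]; simp only [rU35hat4, r24]
    rw [if_pos (by decide : (3:Fin 4) ∈ ({3}:Finset (Fin 4))),
        (by decide : (({3}:Finset (Fin 4)).card = 1))]
    norm_num [min_def]
  have hentp3 : ∀ A : Finset (Fin 4), (3:Fin 4) ∈ A → A.card = 2 →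
      jointEntropy p A = a*3 + b*2 := by
    intro A h3 hc
    rw [hEnt]; simp only [rU35hat4, r24]
    rw [if_pos h3, hc]
    norm_num [min_def]
  have hentt : ∀ A : Finset (Fin 4), (3:Fin 4) ∈ A → A.card = 3 →
      jointEntropy p A = a*3 + b*2 := by
    intro A h3 hc
    rw [hEnt]; simp only [rU35hat4, r24]
    rw [if_pos h3, hc]
    norm_num [min_def]
  -- independence
  have hind : ∀ i j : Fin 4, i ≠ 3 → j ≠ 3 → i ≠ j →
      ∀ u v, marg2 p i j u v = marg1 p i u * marg1 p j v := by
    intro i j hi hj hij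
    apply indep_of_entropy_add p hp0 hp1 hpos
    have hc : ({i, j} : Finset (Fin 4)).card = 2 := by
      rw [Finset.card_insert_of_notMem (by simp [hij]), Finset.card_singleton]
    rw [hent2 _ (by simp [Ne.symm hi, Ne.symm hj]) hc,
        hent1 {i} (by simp [Ne.symm hi]) (Finset.card_singleton i),
        hent1 {j} (by simp [Ne.symm hj]) (Finset.card_singleton j)]
    ring
  have hind3 : ∀ i : Fin 4, i ≠ 3 → ∀ u w, marg2 p i 3 u w = marg1 p i u * marg1 p 3 w := by
    intro i hi
    apply indep_of_entropy_add p hp0 hp1 hpos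
    have hc : ({i, 3} : Finset (Fin 4)).card = 2 := by
      rw [Finset.card_insert_of_notMem (by simp [hi]), Finset.card_singleton]
    rw [hentp3 _ (by simp) hc, hent1 {i} (by simp [Ne.symm hi]) (Finset.card_singleton i),
        hent3s]
    ring
  -- determinism
  have hdet : ∀ i j : Fin 4, i ≠ 3 → j ≠ 3 → i ≠ j → ∀ x x' : (∀ k, Fin (m k)),
      0 < p x → 0 < p x' → x' j = x j → x' 3 = x 3 → x' i = x i := by
    intro i j hi hj hij x x' hx hx' hjj h33
    refine det_point p hp0 i j 3 ?_ hx hx' hjj h33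
    have hc1 : ({j, 3} : Finset (Fin 4)).card = 2 := by
      rw [Finset.card_insert_of_notMem (by simp [hj]), Finset.card_singleton]
    have hc2 : ({i, j, 3} : Finset (Fin 4)).card = 3 := by
      rw [Finset.card_insert_of_notMem (by simp [hij, hi]),
          Finset.card_insert_of_notMem (by simp [hj]), Finset.card_singleton]
    rw [hentp3 _ (by simp) hc1, hentt _ (by simp) hc2]
  -- key bound
  have hm3sum := sum_marg1 p hp1 3
  have hkey : ∀ i j : Fin 4, i ≠ 3 → j ≠ 3 → i ≠ j →
      ∀ v, marg1 p j v ≤ (m i : ℝ)⁻¹ := by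
    intro i j hi hj hij v
    have h := key_bound p hp0 hpos i j 3 hm3sum (hind i j hi hj hij) (hind3 i hi)
      (hdet i j hi hj hij) v
    have hmi : (0:ℝ) < m i := by exact_mod_cast hm i
    rw [← one_div, le_div_iff₀ hmi]
    nlinarith [h]
  have hle : ∀ i j : Fin 4, i ≠ 3 → j ≠ 3 → i ≠ j → m i ≤ m j := by
    intro i j hi hj hij
    have hsum := Finset.sum_le_sum (s := Finset.univ)
      (fun v (_ : v ∈ Finset.univ) => hkey i j hi hj hij v)
    rw [sum_marg1 p hp1 j, Finset.sum_const, Finset.card_univ, Fintype.card_fin,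
        nsmul_eq_mul] at hsum
    have hmi : (0:ℝ) < m i := by exact_mod_cast hm i
    have hmj : (0:ℝ) < m j := by exact_mod_cast hm j
    have hinv : (0:ℝ) < (m i:ℝ)⁻¹ := by positivity
    have : (m i : ℝ) ≤ m j := by
      rw [inv_eq_one_div] at hsum
      rw [mul_one_div] at hsum
      rw [le_div_iff₀ hmi] at hsum
      linarith
    exact_mod_cast this
  have hm01 : m 0 = m 1 :=
    le_antisymm (hle 0 1 (by decide) (by decide) (by decide))
      (hle 1 0 (by decide) (by decide) (by decide))
  have hm12 : m 1 = m 2 :=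
    le_antisymm (hle 1 2 (by decide) (by decide) (by decide))
      (hle 2 1 (by decide) (by decide) (by decide))
  -- upper bounds with own size
  have hub0 : ∀ v, marg1 p 0 v ≤ (m 0:ℝ)⁻¹ := by
    intro v; have := hkey 1 0 (by decide) (by decide) (by decide) v
    rwa [← hm01] at this
  have hub1 : ∀ v, marg1 p 1 v ≤ (m 1:ℝ)⁻¹ := by
    intro v; have := hkey 0 1 (by decide) (by decide) (by decide) v
    rwa [hm01] at this
  have hub2 : ∀ v, marg1 p 2 v ≤ (m 2:ℝ)⁻¹ := by
    intro v; have := hkey 1 2 (by decide) (by decide) (by decide) v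
    rwa [hm12] at this
  have hexact : ∀ j : Fin 4, (∀ v, marg1 p j v ≤ (m j:ℝ)⁻¹) →
      ∀ v, marg1 p j v = (m j:ℝ)⁻¹ := by
    intro j hub v
    by_contra hne2
    have hlt : marg1 p j v < (m j:ℝ)⁻¹ := lt_of_le_of_ne (hub v) hne2
    have hstrict : ∑ v', marg1 p j v' < ∑ _v' : Fin (m j), (m j:ℝ)⁻¹ :=
      Finset.sum_lt_sum (fun v' _ => hub v') ⟨v, Finset.mem_univ v, hlt⟩
    rw [sum_marg1 p hp1 j, Finset.sum_const, Finset.card_univ, Fintype.card_fin,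
        nsmul_eq_mul, mul_inv_cancel₀ (by exact_mod_cast (hm j).ne' : (m j:ℝ) ≠ 0)] at hstrict
    exact lt_irrefl 1 hstrict
  have huni0 := hexact 0 hub0
  have huni1 := hexact 1 hub1
  have huni2 := hexact 2 hub2
  have h0val : jointEntropy p {0} = Real.log (m 0) := by
    unfold jointEntropy
    rw [show (∑ x, p x * Real.log (margProb p {0} x))
        = ∑ x, p x * Real.log ((m 0:ℝ)⁻¹) from
      Finset.sum_congr rfl fun x _ => by rw [margProb_single, huni0 (x 0)]]
    rw [← Finset.sum_mul, hp1, one_mul, Real.log_inv, neg_neg]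
  have h0e : jointEntropy p {0} = a + b :=
    hent1 {0} (by decide) (by decide)
  refine ⟨?_, hm01, hm12, by rw [← h0val, h0e]⟩
  intro i hi x
  fin_cases i
  · exact huni0 x
  · exact huni1 x
  · exact huni2 x
  · exact absurd rfl hi
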